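/- For every real number t > 0, define V₁₁(t) = 9t(2 + 9t⁻³) if t⁻³ ≤ 2/27 and V₁₁(t) = 24t if t⁻³ ≥ 2/27. Then V₁₁(t) ∈ E(t), and every element e of E(t) with e ∉ {γ₁(t), γ₂(t), γ₃(t), γ₄(t), γ₅(t), γ₆(t), γ₇(t), γ₈(t), 8t, t(14 + t⁻³)} satisfies e ≥ V₁₁(t). -/
import Mathlib


/-- `γ_n(t) = t·n·(2 + n·t⁻³)` -/
noncomputable def gammaF (t : ℝ) (n : ℕ) : ℝ := t * n * (2 + n * (t ^ 3)⁻¹)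

/-- `α_k(t) = t·(k(k+2) − 1 + t⁻³)` -/
noncomputable def alphaF (t : ℝ) (k : ℕ) : ℝ := t * (k * (k + 2) - 1 + (t ^ 3)⁻¹)

/-- `β_l(t) = t·l·(l+2)` -/
noncomputable def betaF (t : ℝ) (l : ℕ) : ℝ := t * l * (l + 2)

/-- The set `E(t)` of nonzero eigenvalues of the unit-volume Berger sphere Laplacian. -/
def EV (t : ℝ) : Set ℝ :=
  {x | ∃ n : ℕ, 1 ≤ n ∧ x = gammaF t n} ∪
  {x | ∃ k : ℕ, Odd k ∧ 1 ≤ k ∧ x = alphaF t k} ∪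
  {x | ∃ l : ℕ, Even l ∧ 2 ≤ l ∧ x = betaF t l}

theorem berger_lambda11 (t : ℝ) (ht : 0 < t) :
    ∃ V : ℝ,
      ((t ^ 3)⁻¹ ≤ 2 / 27 → V = 9 * t * (2 + 9 * (t ^ 3)⁻¹)) ∧
      (2 / 27 ≤ (t ^ 3)⁻¹ → V = 24 * t) ∧
      V ∈ EV t ∧
      ∀ e ∈ EV t, e ∉ ({gammaF t 1, gammaF t 2, gammaF t 3, gammaF t 4, gammaF t 5, gammaF t 6, gammaF t 7, gammaF t 8, 8 * t, t * (14 + (t ^ 3)⁻¹)} : Set ℝ) → V ≤ e := by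
  have hs : (0:ℝ) < (t ^ 3)⁻¹ := by positivity
  have hg9 : gammaF t 9 = t * 9 * (2 + 9 * (t ^ 3)⁻¹) := by
    unfold gammaF; push_cast; ring
  refine ⟨min (gammaF t 9) (24 * t), ?_, ?_, ?_, ?_⟩
  · intro h
    rw [min_eq_left (by rw [hg9]; nlinarith), hg9]; ring
  · intro h
    rw [min_eq_right (by rw [hg9]; nlinarith)]
  · rcases le_total (gammaF t 9) (24 * t) with h | h
    · left; left; exact ⟨9, by norm_num, min_eq_left h⟩
    · right
      refine ⟨4, by decide, by norm_num, ?_⟩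
      rw [min_eq_right h]; unfold betaF; push_cast; ring
  · have hmin : min (gammaF t 9) (24 * t) ≤ 24 * t := min_le_right _ _
    rintro e ((⟨n, hn, rfl⟩ | ⟨k, hk, hk1, rfl⟩) | ⟨l, hl, hl2, rfl⟩) he
    · rcases Nat.lt_or_ge n 9 with h | h
      · exfalso; apply he
        interval_cases n
        · left; rfl
        · right; left; rfl
        · right; right; left; rfl
        · right; right; right; left; rfl
        · right; right; right; right; left; rfl
        · right; right; right; right; right; left; rfl
        · right; right; right; right; right; right; left; rfl
        · right; right; right; right; right; right; right; left; rfl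
      · refine le_trans (min_le_left _ _) ?_
        have hn9 : (9:ℝ) ≤ (n:ℕ) := by exact_mod_cast h
        unfold gammaF
        push_cast
        nlinarith [mul_pos ht hs, sq_nonneg ((n:ℝ) - 9)]
    · rcases Nat.lt_or_ge k 5 with h | h
      · exfalso; apply he
        interval_cases k
        · left; unfold alphaF gammaF; push_cast; ring
        · exact absurd hk (by decide)
        · right; right; right; right; right; right; right; right; right
          unfold alphaF; push_cast; norm_num
        · exact absurd hk (by decide)
      · refine le_trans hmin ?_
        have hk5 : (5:ℝ) ≤ (k:ℕ) := by exact_mod_cast h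
        unfold alphaF
        have hk5' : (35:ℝ) ≤ (k:ℝ) * ((k:ℝ) + 2) := by nlinarith
        nlinarith [mul_pos ht hs, mul_le_mul_of_nonneg_left hk5' ht.le]
    · rcases Nat.lt_or_ge l 4 with h | h
      · exfalso; apply he
        interval_cases l
        · right; right; right; right; right; right; right; right; left
          unfold betaF; push_cast; ring
        · exact absurd hl (by decide)
      · refine le_trans hmin ?_
        have hl4 : (4:ℝ) ≤ (l:ℕ) := by exact_mod_cast h
        unfold betaF
        have hl4' : (24:ℝ) ≤ (l:ℝ) * ((l:ℝ) + 2) := by nlinarith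
        nlinarith [mul_le_mul_of_nonneg_left hl4' ht.le]
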